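/- Closed form for the tails of the steady-state distribution: for every n ∈ ℕ, Σ'_{w ∈ ℕ, w ≥ n} π w = (1-ξ)^{⌊n/M⌋} · (1 - ξ·(1-(1-μ)^{n mod M})/σ). -/

import Mathlib

/-- Closed form for the tails of the steady-state distribution. -/
theorem stmt_7 (M : ℕ) (hM : 1 ≤ M) (μ ξ : ℝ)
    (hμ : μ ∈ Set.Ioo (0 : ℝ) 1) (hξ : ξ ∈ Set.Ioo (0 : ℝ) 1)
    (σ : ℝ) (hσ : σ = 1 - (1 - μ) ^ M)
    (π : ℕ → ℝ)
    (hπ : ∀ w, π w = ξ * (1 - ξ) ^ (w / M) * μ * (1 - μ) ^ (w % M) / σ) :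
    ∀ n : ℕ, ∑' w : {w : ℕ // n ≤ w}, π w =
      (1 - ξ) ^ (n / M) * (1 - ξ * (1 - (1 - μ) ^ (n % M)) / σ) := by
  obtain ⟨hμ0, hμ1⟩ := hμ
  obtain ⟨hξ0, hξ1⟩ := hξ
  have hM0 : M ≠ 0 := by omega
  haveI : NeZero M := ⟨hM0⟩
  have h1μ0 : (0:ℝ) < 1 - μ := by linarith
  have h1μ1 : 1 - μ < 1 := by linarith
  have hσ0 : 0 < σ := by
    rw [hσ]
    have := pow_lt_one₀ h1μ0.le h1μ1 hM0
    linarith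
  -- summability pieces
  have hsumf : Summable (fun q : ℕ => ξ * (1 - ξ) ^ q) :=
    (summable_geometric_of_lt_one (by linarith) (by linarith)).mul_left ξ
  set F : ℕ × Fin M → ℝ := fun p => (ξ * (1 - ξ) ^ p.1) * (μ * (1 - μ) ^ (p.2 : ℕ) / σ) with hF
  have hFsum : Summable F := by
    have hg : Summable (fun r : Fin M => μ * (1 - μ) ^ (r : ℕ) / σ) := Summable.of_finite
    exact hsumf.mul_of_nonneg hg
      (fun q => mul_nonneg hξ0.le (pow_nonneg (by linarith) _))
      (fun r => div_nonneg (mul_nonneg hμ0.le (pow_nonneg h1μ0.le _)) hσ0.le)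
  set e := Nat.divModEquiv M with he
  have hkey : ∀ w, π w = F (e w) := by
    intro w
    simp only [hF, he, hπ, Nat.divModEquiv_apply, Fin.val_natCast, Fin.val_ofNat]
    ring
  have hπsum : Summable π := by
    have := hFsum.comp_injective e.injective
    exact this.congr fun w => (hkey w).symm
  -- total sum is 1
  have htot : ∑' w, π w = 1 := by
    have h1 : ∑' w, π w = ∑' p, F p := by
      rw [tsum_congr hkey]
      exact e.tsum_eq F
    rw [h1, Summable.tsum_prod' hFsum (fun b => Summable.of_finite)]
    have h2 : ∀ b : ℕ, ∑' r : Fin M, F (b, r)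
        = (ξ * (1 - ξ) ^ b) * (μ / σ * ∑ i ∈ Finset.range M, (1 - μ) ^ i) := by
      intro b
      have hfin := Fin.sum_univ_eq_sum_range (fun i : ℕ => μ / σ * (1 - μ) ^ i) M
      rw [tsum_fintype, Finset.mul_sum, ← hfin, Finset.mul_sum]
      refine Finset.sum_congr rfl fun r _ => ?_
      simp only [hF]
      ring
    rw [tsum_congr h2, tsum_mul_right, tsum_mul_left,
      tsum_geometric_of_lt_one (by linarith) (by linarith)]
    rw [geom_sum_eq (by intro h; nlinarith) M]
    rw [hσ] at hσ0 ⊢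
    field_simp
    have hξμ : ξ * μ * ξ⁻¹ * μ⁻¹ = 1 := by
      rw [mul_assoc ξ μ, mul_comm μ ξ⁻¹, ← mul_assoc, mul_inv_cancel₀ hξ0.ne', one_mul, mul_inv_cancel₀ hμ0.ne']
    linear_combination (1 - (1 - μ) ^ M) * hξμ
  -- tail as shifted sum
  have hshift : ∀ n : ℕ, (∑' w : {w : ℕ // n ≤ w}, π w) = ∑' k : ℕ, π (n + k) := by
    intro n
    have h := Equiv.tsum_eq
      (⟨fun k => ⟨n + k, Nat.le_add_right _ _⟩, fun w => w.1 - n,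
        fun k => by simp, fun w => by ext; simp [Nat.add_sub_cancel' w.2]⟩ :
        ℕ ≃ {w : ℕ // n ≤ w}) (fun w : {w : ℕ // n ≤ w} => π w.1)
    exact h.symm
  have hsumshift : ∀ n : ℕ, Summable fun k => π (n + k) := by
    intro n
    have := (summable_nat_add_iff n).2 hπsum
    simpa [add_comm] using this
  -- recursion
  have hrec : ∀ n : ℕ, (∑' k : ℕ, π (n + k)) = π n + ∑' k : ℕ, π ((n + 1) + k) := by
    intro n
    rw [Summable.tsum_eq_zero_add (hsumshift n)]
    simp only [add_zero]
    congr 1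
    exact tsum_congr fun k => by congr 1; omega
  intro n
  rw [hshift]
  induction n with
  | zero =>
    simp only [Nat.zero_div, Nat.zero_mod, pow_zero, zero_add]
    rw [htot]
    norm_num
  | succ n ih =>
    have hstep : (∑' k : ℕ, π ((n + 1) + k)) = (∑' k : ℕ, π (n + k)) - π n := by
      rw [hrec n]; ring
    rw [hstep, ih, hπ n]
    have hr : n % M < M := Nat.mod_lt _ (by omega)
    rcases eq_or_lt_of_le (Nat.succ_le_of_lt hr) with h | h
    · -- n % M + 1 = M : rollover
      have h' : n % M + 1 = M := h
      have hdvd : M ∣ n + 1 := ⟨n / M + 1, by have := Nat.div_add_mod n M; rw [Nat.mul_succ]; omega⟩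
      have hmod : (n + 1) % M = 0 := by
        obtain ⟨c, hc⟩ := hdvd
        rw [hc, Nat.mul_mod_right]
      have hdiv : (n + 1) / M = n / M + 1 := by
        rw [Nat.succ_div, if_pos hdvd]
      have hpow : (1 - μ) ^ M = (1 - μ) ^ (n % M) * (1 - μ) := by
        rw [← pow_succ, h']
      rw [hdiv, hmod, pow_succ, pow_zero]
      rw [hσ] at hσ0 ⊢
      rw [hpow] at hσ0 ⊢
      field_simp
      have hne : (1 + μ * (1 - μ) ^ (n % M) - (1 - μ) ^ (n % M)) ≠ 0 := by
        have : (1 + μ * (1 - μ) ^ (n % M) - (1 - μ) ^ (n % M)) = 1 - (1 - μ) ^ (n % M) * (1 - μ) := by ring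
        rw [this]; exact hσ0.ne'
      have key := inv_mul_cancel₀ hne
      linear_combination (-ξ) * key
    · -- no rollover
      have hmod : (n + 1) % M = n % M + 1 := by
        conv_lhs => rw [Nat.add_mod]
        rw [Nat.mod_eq_of_lt (by omega : 1 < M), Nat.mod_eq_of_lt h]
      have hdiv : (n + 1) / M = n / M := by
        rw [Nat.succ_div, if_neg, add_zero]
        intro hd
        obtain ⟨c, hc⟩ := hd
        have h2 : (n + 1) % M = 0 := by rw [hc, Nat.mul_mod_right]
        omega
      rw [hdiv, hmod, pow_succ]
      rw [hσ] at hσ0 ⊢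
      field_simp
      ring
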